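/- Russo–Dye theorem (finite-dimensional): every positive unital linear map T on d×d complex matrices has operator norm equal to 1, where the operator norm is taken with respect to the matrix operator norm. Consequently, every eigenvalue z of T satisfies |z| ≤ 1. -/

import Mathlib

open Matrix ComplexOrder

open scoped Matrix.Norms.L2Operator

noncomputable instance matrixCStarAlgebra (d : ℕ) : CStarAlgebra (Matrix (Fin d) (Fin d) ℂ) := Matrix.instCStarAlgebra

attribute [local instance] IsStarNormal.instContinuousFunctionalCalculus

open scoped MatrixOrder in
private lemma rd_posSemidef_iff_eq_transpose_mul_self {d : ℕ} {Q : Matrix (Fin d) (Fin d) ℂ} :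
    Q.PosSemidef ↔ ∃ B : Matrix (Fin d) (Fin d) ℂ, Q = Bᴴ * B := by
  constructor
  · intro hQ
    obtain ⟨B, hB⟩ := CStarAlgebra.nonneg_iff_eq_star_mul_self.mp hQ.nonneg
    exact ⟨B, hB⟩
  · rintro ⟨B, rfl⟩
    exact Matrix.posSemidef_conjTranspose_mul_self B

private lemma rd_opNorm_le {d : ℕ} (M : Matrix (Fin d) (Fin d) ℂ) {c : ℝ} (hc : 0 ≤ c)
    (h : ∀ x y : EuclideanSpace ℂ (Fin d),
      ‖star ((WithLp.equiv 2 (Fin d → ℂ)) x) ⬝ᵥ (M *ᵥ (WithLp.equiv 2 (Fin d → ℂ)) y)‖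
        ≤ c * ‖x‖ * ‖y‖) :
    ‖M‖ ≤ c := by
  rw [Matrix.l2_opNorm_def]
  refine ContinuousLinearMap.opNorm_le_bound _ hc fun y => ?_
  set v : EuclideanSpace ℂ (Fin d) := (toEuclideanCLM (𝕜 := ℂ) M) y with hv
  have hveq : (WithLp.equiv 2 (Fin d → ℂ)) v = M *ᵥ (WithLp.equiv 2 (Fin d → ℂ)) y := by
    rw [hv]; exact Matrix.ofLp_toEuclideanCLM M y
  have h1 : ‖v‖ * ‖v‖ ≤ (c * ‖y‖) * ‖v‖ := by
    have h2 : RCLike.re (inner (𝕜 := ℂ) v v) = ‖v‖ * ‖v‖ :=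
      inner_self_eq_norm_mul_norm (𝕜 := ℂ) v
    have h3 := h v y
    rw [← hveq, dotProduct_comm] at h3
    change ‖(inner (𝕜 := ℂ) v v : ℂ)‖ ≤ _ at h3
    calc ‖v‖ * ‖v‖ = RCLike.re (inner (𝕜 := ℂ) v v) := h2.symm
      _ ≤ ‖(inner (𝕜 := ℂ) v v : ℂ)‖ := RCLike.re_le_norm _
      _ ≤ c * ‖v‖ * ‖y‖ := h3
      _ = (c * ‖y‖) * ‖v‖ := by ring
  show ‖v‖ ≤ c * ‖y‖
  rcases eq_or_lt_of_le (norm_nonneg v) with h0 | h0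
  · rw [← h0]; positivity
  · exact le_of_mul_le_mul_right h1 h0

private lemma rd_cs {d : ℕ} {Q : Matrix (Fin d) (Fin d) ℂ} (hQ : Q.PosSemidef)
    (x y : Fin d → ℂ) :
    ‖star x ⬝ᵥ (Q *ᵥ y)‖
      ≤ Real.sqrt ((star x ⬝ᵥ (Q *ᵥ x)).re) * Real.sqrt ((star y ⬝ᵥ (Q *ᵥ y)).re) := by
  obtain ⟨B, rfl⟩ := rd_posSemidef_iff_eq_transpose_mul_self.mp hQ
  have key : ∀ u w : Fin d → ℂ, star u ⬝ᵥ ((Bᴴ * B) *ᵥ w)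
      = inner (𝕜 := ℂ) ((WithLp.equiv 2 (Fin d → ℂ)).symm (B *ᵥ u))
          ((WithLp.equiv 2 (Fin d → ℂ)).symm (B *ᵥ w)) := by
    intro u w
    change _ = (B *ᵥ w) ⬝ᵥ star (B *ᵥ u)
    rw [dotProduct_comm (B *ᵥ w), Matrix.star_mulVec, ← Matrix.mulVec_mulVec,
      Matrix.dotProduct_mulVec]
  rw [key, key, key]
  have h1 : ∀ u : Fin d → ℂ,
      (inner (𝕜 := ℂ) ((WithLp.equiv 2 (Fin d → ℂ)).symm (B *ᵥ u))
        ((WithLp.equiv 2 (Fin d → ℂ)).symm (B *ᵥ u))).re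
        = ‖(WithLp.equiv 2 (Fin d → ℂ)).symm (B *ᵥ u)‖ ^ 2 := by
    intro u
    rw [← RCLike.re_to_complex, inner_self_eq_norm_sq (𝕜 := ℂ)]
  rw [h1, h1, Real.sqrt_sq (norm_nonneg _), Real.sqrt_sq (norm_nonneg _)]
  exact norm_inner_le_norm _ _

private lemma rd_sum_mulVec {d : ℕ} (s : Finset ℂ) (Q : ℂ → Matrix (Fin d) (Fin d) ℂ)
    (v : Fin d → ℂ) : (∑ l ∈ s, Q l) *ᵥ v = ∑ l ∈ s, Q l *ᵥ v := by
  simp only [← Matrix.toLin'_apply, map_sum, LinearMap.coe_sum, Finset.sum_apply]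

private lemma rd_dot_sum {d : ℕ} (u : Fin d → ℂ) (s : Finset ℂ) (w : ℂ → Fin d → ℂ) :
    u ⬝ᵥ (∑ l ∈ s, w l) = ∑ l ∈ s, u ⬝ᵥ w l := by
  simp only [dotProduct, Finset.sum_apply, Finset.mul_sum]
  rw [Finset.sum_comm]

private lemma rd_sum_norm {d : ℕ} (s : Finset ℂ) (Q : ℂ → Matrix (Fin d) (Fin d) ℂ)
    (hQ : ∀ l ∈ s, (Q l).PosSemidef) (hsum : ∑ l ∈ s, Q l = 1)
    (hl : ∀ l ∈ s, ‖l‖ ≤ 1) :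
    ‖∑ l ∈ s, l • Q l‖ ≤ 1 := by
  refine rd_opNorm_le _ zero_le_one fun x y => ?_
  set x' := (WithLp.equiv 2 (Fin d → ℂ)) x with hx'
  set y' := (WithLp.equiv 2 (Fin d → ℂ)) y with hy'
  have expand : star x' ⬝ᵥ ((∑ l ∈ s, l • Q l) *ᵥ y')
      = ∑ l ∈ s, l * (star x' ⬝ᵥ (Q l *ᵥ y')) := by
    rw [rd_sum_mulVec, rd_dot_sum]
    refine Finset.sum_congr rfl fun l _ => ?_
    rw [Matrix.smul_mulVec, dotProduct_smul, smul_eq_mul]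
  set f : ℂ → ℝ := fun l => (star x' ⬝ᵥ (Q l *ᵥ x')).re with hf
  set g : ℂ → ℝ := fun l => (star y' ⬝ᵥ (Q l *ᵥ y')).re with hg
  have hf0 : ∀ l ∈ s, 0 ≤ f l := fun l hls => (Complex.nonneg_iff.mp ((hQ l hls).dotProduct_mulVec_nonneg x')).1
  have hg0 : ∀ l ∈ s, 0 ≤ g l := fun l hls => (Complex.nonneg_iff.mp ((hQ l hls).dotProduct_mulVec_nonneg y')).1
  have step1 : ‖∑ l ∈ s, l * (star x' ⬝ᵥ (Q l *ᵥ y'))‖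
      ≤ ∑ l ∈ s, Real.sqrt (f l) * Real.sqrt (g l) := by
    refine (norm_sum_le _ _).trans (Finset.sum_le_sum fun l hls => ?_)
    rw [norm_mul]
    calc ‖l‖ * ‖star x' ⬝ᵥ (Q l *ᵥ y')‖ ≤ 1 * ‖star x' ⬝ᵥ (Q l *ᵥ y')‖ := by
          exact mul_le_mul_of_nonneg_right (hl l hls) (norm_nonneg _)
      _ = ‖star x' ⬝ᵥ (Q l *ᵥ y')‖ := one_mul _
      _ ≤ Real.sqrt (f l) * Real.sqrt (g l) := rd_cs (hQ l hls) x' y'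
  have sumf : ∑ l ∈ s, f l = ‖x‖ ^ 2 := by
    have : ∑ l ∈ s, (star x' ⬝ᵥ (Q l *ᵥ x')) = star x' ⬝ᵥ ((1 : Matrix (Fin d) (Fin d) ℂ) *ᵥ x') := by
      rw [← hsum, rd_sum_mulVec, rd_dot_sum]
    have h2 : (∑ l ∈ s, (star x' ⬝ᵥ (Q l *ᵥ x'))).re = ∑ l ∈ s, f l := by
      simp [hf, Complex.re_sum]
    rw [← h2, this, Matrix.one_mulVec, hx', dotProduct_comm]
    change (inner (𝕜 := ℂ) x x).re = _
    rw [← RCLike.re_to_complex, inner_self_eq_norm_sq (𝕜 := ℂ)]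
  have sumg : ∑ l ∈ s, g l = ‖y‖ ^ 2 := by
    have : ∑ l ∈ s, (star y' ⬝ᵥ (Q l *ᵥ y')) = star y' ⬝ᵥ ((1 : Matrix (Fin d) (Fin d) ℂ) *ᵥ y') := by
      rw [← hsum, rd_sum_mulVec, rd_dot_sum]
    have h2 : (∑ l ∈ s, (star y' ⬝ᵥ (Q l *ᵥ y'))).re = ∑ l ∈ s, g l := by
      simp [hg, Complex.re_sum]
    rw [← h2, this, Matrix.one_mulVec, hy', dotProduct_comm]
    change (inner (𝕜 := ℂ) y y).re = _
    rw [← RCLike.re_to_complex, inner_self_eq_norm_sq (𝕜 := ℂ)]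
  have step2 : (∑ l ∈ s, Real.sqrt (f l) * Real.sqrt (g l)) ^ 2 ≤ (‖x‖ ^ 2) * (‖y‖ ^ 2) := by
    rw [← sumf, ← sumg]
    refine Finset.sum_sq_le_sum_mul_sum_of_sq_eq_mul s hf0 hg0 fun l hls => ?_
    rw [mul_pow, Real.sq_sqrt (hf0 l hls), Real.sq_sqrt (hg0 l hls)]
  have step3 : ∑ l ∈ s, Real.sqrt (f l) * Real.sqrt (g l) ≤ ‖x‖ * ‖y‖ := by
    have hnn : 0 ≤ ∑ l ∈ s, Real.sqrt (f l) * Real.sqrt (g l) :=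
      Finset.sum_nonneg fun l hls => mul_nonneg (Real.sqrt_nonneg _) (Real.sqrt_nonneg _)
    nlinarith [step2, norm_nonneg x, norm_nonneg y, mul_nonneg (norm_nonneg x) (norm_nonneg y)]
  rw [expand]
  calc ‖∑ l ∈ s, l * (star x' ⬝ᵥ (Q l *ᵥ y'))‖ ≤ ∑ l ∈ s, Real.sqrt (f l) * Real.sqrt (g l) := step1
    _ ≤ ‖x‖ * ‖y‖ := step3
    _ = 1 * ‖x‖ * ‖y‖ := by ring

private lemma rd_unitary {d : ℕ}
    (T : Matrix (Fin d) (Fin d) ℂ →ₗ[ℂ] Matrix (Fin d) (Fin d) ℂ)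
    (hpos : ∀ X : Matrix (Fin d) (Fin d) ℂ, X.PosSemidef → (T X).PosSemidef)
    (hunital : T 1 = 1)
    (U : Matrix (Fin d) (Fin d) ℂ) (hU : U ∈ Matrix.unitaryGroup (Fin d) ℂ) :
    ‖T U‖ ≤ 1 := by
  haveI hN : IsStarNormal U := ⟨by
    rw [Commute, SemiconjBy, Matrix.mem_unitaryGroup_iff'.mp hU, Matrix.mem_unitaryGroup_iff.mp hU]⟩
  have hfin : (spectrum ℂ U).Finite := Matrix.finite_spectrum U
  set s : Finset ℂ := hfin.toFinset with hs
  set f : ℂ → ℂ → ℂ := fun l z => if z = l then 1 else 0 with hfdef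
  have hcont : ∀ l, ContinuousOn (f l) (spectrum ℂ U) := fun l => hfin.continuousOn _
  set P : ℂ → Matrix (Fin d) (Fin d) ℂ := fun l => cfc (f l) U with hP
  have hPSD : ∀ l, (P l).PosSemidef := by
    intro l
    have h1 : (P l)ᴴ * (P l) = P l := by
      rw [← Matrix.star_eq_conjTranspose, ← cfc_star (f l) U, ← cfc_mul _ _ U
        (by exact (hfin.continuousOn _)) (hcont l)]
      refine cfc_congr fun z _ => ?_
      simp only [hfdef]
      split_ifs <;> simp
    exact rd_posSemidef_iff_eq_transpose_mul_self.mpr ⟨P l, h1.symm⟩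
  have hsum1 : ∑ l ∈ s, P l = 1 := by
    have h1 : ∑ l ∈ s, P l = cfc (∑ l ∈ s, f l) U :=
      (cfc_sum f U s fun l _ => hcont l).symm
    rw [h1]
    have h2 : cfc (∑ l ∈ s, f l) U = cfc (fun _ : ℂ => (1 : ℂ)) U := by
      refine cfc_congr fun z hz => ?_
      have hzs : z ∈ s := hfin.mem_toFinset.mpr hz
      simp only [Finset.sum_apply, hfdef]
      rw [Finset.sum_ite_eq s z (fun _ => (1 : ℂ))]
      simp [hzs]
    rw [h2]
    exact cfc_one ℂ U
  have hdecomp : U = ∑ l ∈ s, l • P l := by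
    conv_lhs => rw [← cfc_id ℂ U]
    have h2 : cfc (id : ℂ → ℂ) U = cfc (∑ l ∈ s, fun z => l * f l z) U := by
      refine cfc_congr fun z hz => ?_
      have hzs : z ∈ s := hfin.mem_toFinset.mpr hz
      simp only [Finset.sum_apply, hfdef, mul_ite, mul_one, mul_zero]
      rw [Finset.sum_ite_eq s z (fun l => l)]
      simp [hzs]
    have h3 := cfc_sum (fun l z => l * f l z) U s
      (fun l _ => ContinuousOn.mul continuousOn_const (hcont l))
    rw [h2, h3]
    refine Finset.sum_congr rfl fun l _ => ?_
    exact cfc_const_mul l (f l) U (hcont l)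
  have hlnorm : ∀ l ∈ s, ‖l‖ ≤ 1 := by
    intro l hl
    have hls : l ∈ spectrum ℂ U := hfin.mem_toFinset.mp hl
    have := spectrum.subset_circle_of_unitary (𝕜 := ℂ) hU hls
    rw [Metric.mem_sphere, dist_zero_right] at this
    exact this.le
  have hTU : T U = ∑ l ∈ s, l • T (P l) := by
    rw [hdecomp, map_sum]
    exact Finset.sum_congr rfl fun l _ => map_smul T l (P l)
  rw [hTU]
  refine rd_sum_norm s (fun l => T (P l)) (fun l _ => hpos _ (hPSD l)) ?_ hlnorm
  rw [← map_sum, hsum1, hunital]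

private lemma rd_contraction {d : ℕ} [NeZero d]
    (T : Matrix (Fin d) (Fin d) ℂ →ₗ[ℂ] Matrix (Fin d) (Fin d) ℂ)
    (hpos : ∀ X : Matrix (Fin d) (Fin d) ℂ, X.PosSemidef → (T X).PosSemidef)
    (hunital : T 1 = 1)
    (Y : Matrix (Fin d) (Fin d) ℂ) (hY : IsUnit Y) (hnorm : ‖Y‖ ≤ 1) :
    ‖T Y‖ ≤ 1 := by
  obtain ⟨Yu, hYu⟩ := hY
  have hY'Y : (↑Yu⁻¹ : Matrix (Fin d) (Fin d) ℂ) * Y = 1 := by rw [← hYu]; exact Yu.inv_mul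
  -- `H = Yᴴ * Y` is positive definite
  set H : Matrix (Fin d) (Fin d) ℂ := Yᴴ * Y with hHdef
  have hmvinj : Function.Injective Y.mulVec := by
    intro u v huv
    have : (↑Yu⁻¹ : Matrix (Fin d) (Fin d) ℂ) *ᵥ (Y *ᵥ u)
        = (↑Yu⁻¹ : Matrix (Fin d) (Fin d) ℂ) *ᵥ (Y *ᵥ v) := by rw [huv]
    rwa [Matrix.mulVec_mulVec, Matrix.mulVec_mulVec, hY'Y, Matrix.one_mulVec,
      Matrix.one_mulVec] at this
  have hdot : ∀ u v : Fin d → ℂ, star u ⬝ᵥ (H *ᵥ v) = star (Y *ᵥ u) ⬝ᵥ (Y *ᵥ v) := by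
    intro u v
    rw [Matrix.star_mulVec, hHdef, ← Matrix.mulVec_mulVec, Matrix.dotProduct_mulVec]
  have hH : H.PosDef := by
    refine Matrix.PosDef.of_dotProduct_mulVec_pos (Matrix.isHermitian_conjTranspose_mul_self Y) fun x hx => ?_
    rw [hdot]
    exact Matrix.dotProduct_star_self_pos_iff.mpr fun h => hx (by
      have := hmvinj (a₁ := x) (a₂ := 0) (by rw [h, Matrix.mulVec_zero]); exact this)
  have hHher : H.IsHermitian := hH.1
  set g : Fin d → ℝ := hHher.eigenvalues with hg
  set V : Matrix (Fin d) (Fin d) ℂ := ↑(hHher.eigenvectorUnitary) with hV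
  have hVmem : V ∈ Matrix.unitaryGroup (Fin d) ℂ := hHher.eigenvectorUnitary.2
  have hVV : Vᴴ * V = 1 := by
    rw [← Matrix.star_eq_conjTranspose]; exact Matrix.mem_unitaryGroup_iff'.mp hVmem
  have hVV' : V * Vᴴ = 1 := by
    rw [← Matrix.star_eq_conjTranspose]; exact Matrix.mem_unitaryGroup_iff.mp hVmem
  set M : (Fin d → ℂ) → Matrix (Fin d) (Fin d) ℂ := fun v => V * diagonal v * Vᴴ with hM
  have hspec : H = M (fun i => (g i : ℂ)) := by
    have := hHher.spectral_theorem
    rw [this]; rfl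
  have hMmul : ∀ v w, M v * M w = M (fun i => v i * w i) := by
    intro v w
    simp only [hM]
    calc V * diagonal v * Vᴴ * (V * diagonal w * Vᴴ)
        = V * diagonal v * (Vᴴ * V) * diagonal w * Vᴴ := by
          simp only [Matrix.mul_assoc]
      _ = V * (diagonal v * diagonal w) * Vᴴ := by rw [hVV]; simp only [Matrix.mul_one,
          Matrix.mul_assoc]
      _ = V * diagonal (fun i => v i * w i) * Vᴴ := by rw [Matrix.diagonal_mul_diagonal]
  have hMstar : ∀ v, (M v)ᴴ = M (star v) := by
    intro v
    simp only [hM, Matrix.conjTranspose_mul, Matrix.diagonal_conjTranspose,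
      Matrix.conjTranspose_conjTranspose, Matrix.mul_assoc]
  have hMone : M (fun _ => 1) = 1 := by
    simp only [hM]
    rw [show (diagonal fun _ : Fin d => (1:ℂ)) = 1 from Matrix.diagonal_one, Matrix.mul_one, hVV']
  -- eigenvalue bounds
  have hgpos : ∀ i, 0 < g i := fun i => hH.eigenvalues_pos i
  have hgle : ∀ i, g i ≤ 1 := by
    intro i
    have hmem : g i ∈ spectrum ℝ H := hHher.eigenvalues_mem_spectrum_real i
    have h1 : ‖g i‖ ≤ ‖H‖ := spectrum.norm_le_norm_of_mem hmem
    have h2 : ‖H‖ ≤ 1 := by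
      rw [hHdef, Matrix.l2_opNorm_conjTranspose_mul_self]
      exact mul_le_one₀ hnorm (norm_nonneg _) hnorm
    calc g i ≤ ‖g i‖ := le_abs_self _
      _ ≤ 1 := h1.trans h2
  -- the two unitary factors
  set w1 : Fin d → ℂ := fun i =>
    ((Real.sqrt (g i))⁻¹ : ℝ) * ((Real.sqrt (g i) : ℝ) + Complex.I * (Real.sqrt (1 - g i) : ℝ))
    with hw1
  set w2 : Fin d → ℂ := fun i =>
    ((Real.sqrt (g i))⁻¹ : ℝ) * ((Real.sqrt (g i) : ℝ) - Complex.I * (Real.sqrt (1 - g i) : ℝ))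
    with hw2
  have hfacts : ∀ i, ((Real.sqrt (g i) : ℂ) ^ 2 = (g i : ℂ)
      ∧ (Real.sqrt (1 - g i) : ℂ) ^ 2 = 1 - (g i : ℂ)) ∧ (Real.sqrt (g i) : ℂ) ≠ 0 := by
    intro i
    refine ⟨⟨?_, ?_⟩, ?_⟩
    · rw [← Complex.ofReal_pow, Real.sq_sqrt (hgpos i).le]
    · rw [← Complex.ofReal_pow, Real.sq_sqrt (by linarith [hgle i])]
      push_cast; ring
    · simpa using (Real.sqrt_pos.mpr (hgpos i)).ne'
  have hwg : ∀ (w : Fin d → ℂ), (w = w1 ∨ w = w2) →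
      ∀ i, star (w i) * ((g i : ℂ) * w i) = 1 := by
    rintro w (rfl | rfl) i <;>
    · obtain ⟨⟨hp, hq⟩, hp0⟩ := hfacts i
      simp only [hw1, hw2, star_mul', Complex.star_def, map_add, map_sub, _root_.map_mul, Complex.conj_ofReal,
        Complex.conj_I, Complex.ofReal_inv, map_inv₀]
      field_simp
      linear_combination ((g i : ℂ) - 1) * hp + (g i : ℂ) * hq
        - ((Real.sqrt (1 - g i) : ℂ))^2 * (g i : ℂ) * Complex.I_sq
  have hunit : ∀ (w : Fin d → ℂ), (w = w1 ∨ w = w2) →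
      Y * M w ∈ Matrix.unitaryGroup (Fin d) ℂ := by
    intro w hw
    refine Matrix.mem_unitaryGroup_iff'.mpr ?_
    have h1 : star (Y * M w) = M (star w) * Yᴴ := by
      rw [StarMul.star_mul, Matrix.star_eq_conjTranspose, ← hMstar]; rfl
    rw [h1]
    calc M (star w) * Yᴴ * (Y * M w) = M (star w) * (H * M w) := by
          rw [hHdef]; simp only [Matrix.mul_assoc]
      _ = M (star w) * (M (fun i => (g i : ℂ)) * M w) := by rw [← hspec]
      _ = M (star w) * M (fun i => (g i : ℂ) * w i) := by rw [hMmul]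
      _ = M (fun _ => 1) := by
          rw [hMmul]
          exact congrArg M (funext (hwg w hw))
      _ = 1 := hMone
  have hMadd : M w1 + M w2 = M (fun i => w1 i + w2 i) := by
    simp only [hM]
    rw [← Matrix.diagonal_add, Matrix.mul_add, Matrix.add_mul]
  have hsumw : (fun i => w1 i + w2 i) = fun _ : Fin d => (2 : ℂ) := by
    funext i
    obtain ⟨⟨hp, hq⟩, hp0⟩ := hfacts i
    simp only [hw1, hw2, Complex.ofReal_inv]
    field_simp
    ring
  have hM2 : M (fun _ : Fin d => (2 : ℂ)) = (2 : ℂ) • 1 := by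
    simp only [hM]
    have : (diagonal fun _ : Fin d => (2 : ℂ)) = (2 : ℂ) • (1 : Matrix (Fin d) (Fin d) ℂ) := by
      ext i j
      by_cases h : i = j <;> simp [Matrix.diagonal_apply, Matrix.one_apply, h]
    rw [this]
    rw [Matrix.mul_smul, Matrix.smul_mul, Matrix.mul_one, hVV']
  have hYdecomp : Y = (2⁻¹ : ℂ) • (Y * M w1 + Y * M w2) := by
    rw [← Matrix.mul_add, hMadd, hsumw, hM2]
    rw [Matrix.mul_smul, Matrix.mul_one, smul_smul]
    norm_num
  have hTY : T Y = (2⁻¹ : ℂ) • (T (Y * M w1) + T (Y * M w2)) := by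
    conv_lhs => rw [hYdecomp]
    rw [_root_.map_smul, map_add]
  rw [hTY]
  have h1 := rd_unitary T hpos hunital _ (hunit w1 (Or.inl rfl))
  have h2 := rd_unitary T hpos hunital _ (hunit w2 (Or.inr rfl))
  rw [norm_smul]
  calc ‖(2⁻¹ : ℂ)‖ * ‖T (Y * M w1) + T (Y * M w2)‖
      ≤ ‖(2⁻¹ : ℂ)‖ * (‖T (Y * M w1)‖ + ‖T (Y * M w2)‖) := by
        exact mul_le_mul_of_nonneg_left (norm_add_le _ _) (norm_nonneg _)
    _ ≤ ‖(2⁻¹ : ℂ)‖ * (1 + 1) := by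
        refine mul_le_mul_of_nonneg_left (add_le_add h1 h2) (norm_nonneg _)
    _ = 1 := by norm_num

private lemma rd_bound {d : ℕ} [NeZero d]
    (T : Matrix (Fin d) (Fin d) ℂ →ₗ[ℂ] Matrix (Fin d) (Fin d) ℂ)
    (hpos : ∀ X : Matrix (Fin d) (Fin d) ℂ, X.PosSemidef → (T X).PosSemidef)
    (hunital : T 1 = 1) (X : Matrix (Fin d) (Fin d) ℂ) :
    ‖T X‖ ≤ ‖X‖ := by
  have hunitcase : ∀ Y : Matrix (Fin d) (Fin d) ℂ, IsUnit Y → ‖T Y‖ ≤ ‖Y‖ := by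
    intro Y hY
    have hY0 : Y ≠ 0 := hY.ne_zero
    have hc : (0 : ℝ) < ‖Y‖ := norm_pos_iff.mpr hY0
    set c : ℝ := ‖Y‖ with hcdef
    set Y' : Matrix (Fin d) (Fin d) ℂ := ((c : ℂ))⁻¹ • Y with hY'
    have hcne : (c : ℂ) ≠ 0 := by
      simp only [ne_eq, Complex.ofReal_eq_zero]
      exact hc.ne'
    have hY'unit : IsUnit Y' := by
      rw [hY', Algebra.smul_def]
      exact (IsUnit.map (algebraMap ℂ (Matrix (Fin d) (Fin d) ℂ)) (isUnit_iff_ne_zero.mpr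
        (inv_ne_zero hcne))).mul hY
    have hY'norm : ‖Y'‖ ≤ 1 := by
      rw [hY', norm_smul]
      rw [norm_inv]
      simp only [Complex.norm_real, Real.norm_eq_abs, abs_of_pos hc]
      rw [← hcdef, inv_mul_cancel₀ hc.ne']
    have h1 : ‖T Y'‖ ≤ 1 := rd_contraction T hpos hunital Y' hY'unit hY'norm
    have h2 : T Y' = ((c : ℂ))⁻¹ • T Y := by rw [hY', _root_.map_smul]
    rw [h2, norm_smul, norm_inv] at h1
    have h3 : ‖(c : ℂ)‖ = c := by
      simp only [Complex.norm_real, Real.norm_eq_abs, abs_of_pos hc]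
    rw [h3] at h1
    calc ‖T Y‖ = c * (c⁻¹ * ‖T Y‖) := by field_simp
      _ ≤ c * 1 := by exact mul_le_mul_of_nonneg_left h1 hc.le
      _ = c := mul_one c
  -- now the general case by approximation with invertible matrices
  have hfin : (spectrum ℂ X).Finite := Matrix.finite_spectrum X
  have hBfin : {t : ℝ | (-(t : ℝ) : ℂ) ∈ spectrum ℂ X}.Finite := by
    have hinj : Function.Injective (fun t : ℝ => (-(t : ℝ) : ℂ)) := by
      intro a b hab
      simpa using hab
    exact Set.Finite.preimage hinj.injOn hfin
  have hev : ∀ᶠ (t : ℝ) in nhdsWithin 0 {0}ᶜ,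
      ‖T (X + (t : ℂ) • 1)‖ ≤ ‖X + (t : ℂ) • 1‖ := by
    have hclosed : IsClosed ({t : ℝ | (-(t : ℝ) : ℂ) ∈ spectrum ℂ X} \ {0}) :=
      (hBfin.subset Set.diff_subset).isClosed
    have h0 : (0 : ℝ) ∈ ({t : ℝ | (-(t : ℝ) : ℂ) ∈ spectrum ℂ X} \ {0})ᶜ := by
      simp
    have hev1 : ∀ᶠ t in nhdsWithin (0:ℝ) {0}ᶜ,
        t ∈ ({t : ℝ | (-(t : ℝ) : ℂ) ∈ spectrum ℂ X} \ {0})ᶜ :=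
      eventually_nhdsWithin_of_eventually_nhds (hclosed.isOpen_compl.eventually_mem h0)
    have hev2 : ∀ᶠ t in nhdsWithin (0:ℝ) {0}ᶜ, t ∈ ({0} : Set ℝ)ᶜ :=
      eventually_mem_nhdsWithin
    filter_upwards [hev1, hev2] with t ht1 ht2
    have hts : (-(t : ℝ) : ℂ) ∉ spectrum ℂ X := by
      intro hmem
      exact ht1 ⟨hmem, ht2⟩
    have hunit : IsUnit (X + (t : ℂ) • 1) := by
      rw [spectrum.notMem_iff] at hts
      have : algebraMap ℂ (Matrix (Fin d) (Fin d) ℂ) (-(t:ℝ) : ℂ) - X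
          = -(X + (t : ℂ) • 1) := by
        rw [Algebra.algebraMap_eq_smul_one]
        rw [neg_smul]
        abel
      rw [this] at hts
      have h4 := hts.neg
      rwa [neg_neg] at h4
    exact hunitcase _ hunit
  have hcont1 : Filter.Tendsto (fun t : ℝ => X + (t : ℂ) • 1)
      (nhdsWithin 0 {0}ᶜ) (nhds X) := by
    have : Continuous (fun t : ℝ => X + (t : ℂ) • (1 : Matrix (Fin d) (Fin d) ℂ)) := by
      fun_prop
    have h2 := (this.tendsto 0).mono_left
      (nhdsWithin_le_nhds (s := ({0}ᶜ : Set ℝ)))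
    simpa using h2
  have hTcont : Continuous T := T.continuous_of_finiteDimensional
  have hlim1 : Filter.Tendsto (fun t : ℝ => ‖T (X + (t : ℂ) • 1)‖)
      (nhdsWithin 0 {0}ᶜ) (nhds ‖T X‖) :=
    (hTcont.norm.tendsto X).comp hcont1
  have hlim2 : Filter.Tendsto (fun t : ℝ => ‖X + (t : ℂ) • 1‖)
      (nhdsWithin 0 {0}ᶜ) (nhds ‖X‖) :=
    (continuous_norm.tendsto X).comp hcont1
  exact le_of_tendsto_of_tendsto hlim1 hlim2 hev

/-- Russo–Dye theorem (finite-dimensional): a positive unital linear map on `d × d` complex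
matrices has operator norm `1` (with respect to the matrix `ℓ²`-operator norm); consequently
every eigenvalue `z` satisfies `‖z‖ ≤ 1`. -/
theorem russo_dye (d : ℕ) [NeZero d]
    (T : Matrix (Fin d) (Fin d) ℂ →ₗ[ℂ] Matrix (Fin d) (Fin d) ℂ)
    (hpos : ∀ X : Matrix (Fin d) (Fin d) ℂ, X.PosSemidef → (T X).PosSemidef)
    (hunital : T 1 = 1) :
    sSup ((fun X : Matrix (Fin d) (Fin d) ℂ => ‖T X‖) '' {X | ‖X‖ = 1}) = 1 ∧
      ∀ (z : ℂ) (X : Matrix (Fin d) (Fin d) ℂ), X ≠ 0 → T X = z • X → ‖z‖ ≤ 1 := by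
  have hbound : ∀ X, ‖T X‖ ≤ ‖X‖ := rd_bound T hpos hunital
  constructor
  · refine IsGreatest.csSup_eq ⟨⟨1, ?_, ?_⟩, ?_⟩
    · show ‖(1 : Matrix (Fin d) (Fin d) ℂ)‖ = 1
      exact norm_one
    · show ‖T 1‖ = 1
      rw [hunital]
      exact norm_one
    · rintro a ⟨X, hX, rfl⟩
      calc ‖T X‖ ≤ ‖X‖ := hbound X
        _ = 1 := hX
  · intro z X hX0 hTX
    have h1 := hbound X
    rw [hTX, norm_smul] at h1
    have hx : 0 < ‖X‖ := norm_pos_iff.mpr hX0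
    nlinarith [norm_nonneg z]
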